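/- Let A be a commonly graded algebra with graded Jacobson radical J and b = b_l(A) = inf{ i | A_i ≠ 0 }. Then the quotient A/J is concentrated in degrees between b and -b; in particular A/J is finite-dimensional over k. -/
import Mathlib


open DirectSum

variable (k : Type) [Field k] (A : Type) [Ring A] [Algebra k A]

/-- A `ℤ`-graded algebra is *commonly graded* if it is locally finite and bounded below. -/
def CommonlyGraded (𝒜 : ℤ → Submodule k A) : Prop :=
  (∀ i : ℤ, FiniteDimensional k (𝒜 i)) ∧ ∃ b : ℤ, ∀ i : ℤ, i < b → 𝒜 i = ⊥

/-- A maximal graded left ideal: a homogeneous proper left ideal which is maximal among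
homogeneous proper left ideals. -/
def IsMaxGradedLeftIdeal (𝒜 : ℤ → Submodule k A) [GradedRing 𝒜] (L : Ideal A) : Prop :=
  Ideal.IsHomogeneous 𝒜 L ∧ L ≠ ⊤ ∧
    ∀ I : Ideal A, Ideal.IsHomogeneous 𝒜 I → I ≠ ⊤ → L ≤ I → I = L

/-- The graded Jacobson radical: the intersection of all maximal graded left ideals. -/
noncomputable def grJacobson (𝒜 : ℤ → Submodule k A) [GradedRing 𝒜] : Ideal A :=
  sInf {L : Ideal A | IsMaxGradedLeftIdeal k A 𝒜 L}

/-- The graded Jacobson radical viewed as a `k`-subspace of `A`. -/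
noncomputable def grJacobsonK (𝒜 : ℤ → Submodule k A) [GradedRing 𝒜] : Submodule k A :=
  Submodule.restrictScalars k (grJacobson k A 𝒜)

/-- `A_{≥ i}`, the sum of the homogeneous components of degree at least `i`. -/
def AgeSub (𝒜 : ℤ → Submodule k A) (i : ℤ) : Submodule k A :=
  ⨆ j : ℤ, ⨆ _ : i ≤ j, 𝒜 j

theorem stmt_1 (𝒜 : ℤ → Submodule k A) [GradedRing 𝒜]
    (hA : CommonlyGraded k A 𝒜) (b : ℤ) (hb : IsLeast {i : ℤ | 𝒜 i ≠ ⊥} b) :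
    (∀ i : ℤ, (i < b ∨ -b < i) → ∀ x ∈ 𝒜 i, x ∈ grJacobson k A 𝒜) ∧
    FiniteDimensional k (A ⧸ grJacobsonK k A 𝒜) := by
  have hbot : ∀ i : ℤ, i < b → 𝒜 i = ⊥ := by
    intro i hi
    by_contra h
    exact absurd (hb.2 h) (not_le.mpr hi)
  have key : ∀ i : ℤ, (i < b ∨ -b < i) → ∀ x ∈ 𝒜 i, x ∈ grJacobson k A 𝒜 := by
    intro i hi x hx
    rcases hi with hi | hi
    · rw [hbot i hi] at hx
      simp only [Submodule.mem_bot] at hx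
      simp [hx]
    · -- i > -b, so -i < b
      rw [grJacobson, Ideal.mem_sInf]
      rintro L ⟨hLhom, hLne, hLmax⟩
      by_contra hxL
      -- consider L ⊔ span {x}
      set K : Ideal A := L ⊔ Ideal.span {x} with hK
      have hKhom : Ideal.IsHomogeneous 𝒜 K :=
        hLhom.sup (Ideal.homogeneous_span 𝒜 {x} (by rintro y rfl; exact ⟨i, hx⟩))
      have hKtop : K = ⊤ := by
        by_contra hKne
        have := hLmax K hKhom hKne le_sup_left
        exact hxL (this ▸ le_sup_right (α := Ideal A) (Ideal.subset_span rfl))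
      have h1 : (1 : A) ∈ K := hKtop ▸ Submodule.mem_top
      rw [hK, Submodule.mem_sup] at h1
      obtain ⟨l, hl, y, hy, hly⟩ := h1
      rw [Ideal.mem_span_singleton'] at hy
      obtain ⟨a, rfl⟩ := hy
      -- project to degree 0
      have h0 : (DirectSum.decompose 𝒜 (1 : A) 0 : A) =
          (DirectSum.decompose 𝒜 l 0 : A) + (DirectSum.decompose 𝒜 (a * x) 0 : A) := by
        rw [← hly]
        rw [DirectSum.decompose_add]
        simp
      have hone : (DirectSum.decompose 𝒜 (1 : A) 0 : A) = 1 :=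
        DirectSum.decompose_of_mem_same 𝒜 SetLike.GradedOne.one_mem
      have hax : (DirectSum.decompose 𝒜 (a * x) 0 : A) = 0 := by
        have : (DirectSum.decompose 𝒜 (a * x) (-i + i) : A) =
            (DirectSum.decompose 𝒜 a (-i) : A) * x :=
          DirectSum.coe_decompose_mul_add_of_right_mem 𝒜 hx
        rw [neg_add_cancel] at this
        rw [this]
        have hz : ∀ y : A, y ∈ 𝒜 (-i) → y = 0 := by
          rw [hbot (-i) (by omega)]; simp
        have : (DirectSum.decompose 𝒜 a (-i) : A) = 0 :=
          hz _ (DirectSum.decompose 𝒜 a (-i)).2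
        rw [this, zero_mul]
      have : (1 : A) ∈ L := by
        rw [← hone, h0, hax, add_zero]
        exact hLhom 0 hl
      exact hLne (Ideal.eq_top_iff_one L |>.mpr this)
  refine ⟨key, ?_⟩
  -- finite dimensionality of the quotient
  set J := grJacobsonK k A 𝒜 with hJ
  set S : Submodule k A := (Finset.Icc b (-b)).sup (fun i => 𝒜 i) with hS
  haveI : FiniteDimensional k S := by
    haveI := hA.1
    exact Submodule.finiteDimensional_finset_sup _ _
  have hSJ : S ⊔ J = ⊤ := by
    rw [eq_top_iff]
    have htop : (⨆ i : ℤ, 𝒜 i) = ⊤ :=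
      (DirectSum.Decomposition.isInternal 𝒜).submodule_iSup_eq_top
    rw [← htop]
    refine iSup_le fun i => ?_
    by_cases hi : i ∈ Finset.Icc b (-b)
    · exact le_trans (Finset.le_sup hi) le_sup_left
    · have : i < b ∨ -b < i := by
        simp only [Finset.mem_Icc, not_and, not_le] at hi
        omega
      refine le_trans ?_ le_sup_right
      intro x hx
      exact key i this x hx
  -- the quotient is the image of S
  have hsurj : Function.Surjective ((J.mkQ).comp S.subtype) := by
    intro q
    obtain ⟨a, rfl⟩ := Submodule.mkQ_surjective J q
    have ha : a ∈ S ⊔ J := hSJ ▸ Submodule.mem_top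
    rw [Submodule.mem_sup] at ha
    obtain ⟨s, hs, j, hj, rfl⟩ := ha
    refine ⟨⟨s, hs⟩, ?_⟩
    simp only [LinearMap.comp_apply, Submodule.subtype_apply, Submodule.mkQ_apply]
    rw [Submodule.Quotient.mk_add, (Submodule.Quotient.mk_eq_zero J).mpr hj, add_zero]
  exact Module.Finite.of_surjective _ hsurj
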